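/- arXiv:2401.07262 — 2 statements merged into one kernel-verified Lean document; each statement's English description precedes it below -/
import Mathlib

section
/- Let $H$ be a bounded self-adjoint discrete Schrödinger operator on $\ell^2(\mathbb{Z}^d)$. Suppose the Combes-Thomas estimate holds: $|(H-E)^{-1}(n,m)| \le (2/\delta)\, e^{-c\delta|n-m|}$ for all $n,m$, where $\delta = \mathrm{dist}(E, \sigma(H)) > 0$ and $c > 0$. If $\psi$ is a generalized eigenfunction of $H$ with generalized eigenvalue $E \notin \sigma(H)$, then for every $L$ and every $n_0 \in \mathbb{Z}^d$, $\sum_{n \in \overline{\partial}\Lambda_L(n_0)} |\psi(n)| \ge \frac{\delta}{2d}\, e^{c\delta L}\, |\psi(n_0)|$. -/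
noncomputable section
open Complex Real MeasureTheory Filter
open scoped ENNReal NNReal

/-- Lattice sites of `ℤ^d`. -/
abbrev Site (d : ℕ) := Fin d → ℤ

/-- Sup norm `|n| = max_ν |n_ν|` on `ℤ^d` (as a natural number). -/
def supN {d : ℕ} (n : Site d) : ℕ := Finset.univ.sup fun ν => (n ν).natAbs

/-- The free discrete Laplacian `H₀ u (n) = ∑_{|j|=1} u (n+j)` (sum over the `2d`
nearest neighbours `±e_ν`), acting on arbitrary functions. -/
def lapOp {d : ℕ} (u : Site d → ℂ) (n : Site d) : ℂ :=
  ∑ ν : Fin d, (u (Function.update n ν (n ν + 1)) + u (Function.update n ν (n ν - 1)))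

/-- The discrete Schrödinger operator `H = H₀ + V` as a difference operator on
arbitrary functions. -/
def schrOp {d : ℕ} (V : Site d → ℝ) (u : Site d → ℂ) (n : Site d) : ℂ :=
  lapOp u n + (V n : ℂ) * u n

/-- The Hilbert space `ℓ²(ℤ^d)`. -/
abbrev L2 (d : ℕ) := lp (fun _ : Site d => ℂ) 2

/-- The standard basis vector `δ_n` of `ℓ²(ℤ^d)`. -/
def dl {d : ℕ} (n : Site d) : L2 d := lp.single 2 n 1

/-- The resolvent `(H - z)⁻¹` of a bounded operator (junk value `0` if `H - z`
is not invertible). -/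
def res {d : ℕ} (H : L2 d →L[ℂ] L2 d) (z : ℂ) : L2 d →L[ℂ] L2 d :=
  Ring.inverse (H - z • (1 : L2 d →L[ℂ] L2 d))

/-- The Green function: matrix elements `(H - z)⁻¹(a, b) = ⟨δ_b, (H - z)⁻¹ δ_a⟩`. -/
def grn {d : ℕ} (H : L2 d →L[ℂ] L2 d) (z : ℂ) (a b : Site d) : ℂ :=
  inner ℂ (dl b) (res H z (dl a))

/-- `H` is the bounded operator on `ℓ²(ℤ^d)` acting as the Schrödinger
difference operator with potential `V`. -/
def IsSchrodingerOp {d : ℕ} (H : L2 d →L[ℂ] L2 d) (V : Site d → ℝ) : Prop :=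
  (∃ M, ∀ n, |V n| ≤ M) ∧ ∀ (u : L2 d) (n : Site d), (H u) n = schrOp V (fun m => u m) n

/-- The indicator function `χ_L` of the cube `Λ_L = {n : |n| ≤ L}`. -/
def chiL {d : ℕ} (L : ℕ) (n : Site d) : ℂ := if supN n ≤ L then 1 else 0

/-- The boundary term `R_{L,ψ}(m) = ∑_{|k|=1} (χ_L(m+k) - χ_L(m)) ψ(m+k)`. -/
def bdryR {d : ℕ} (L : ℕ) (ψ : Site d → ℂ) (m : Site d) : ℂ :=
  ∑ ν : Fin d,
    ((chiL L (Function.update m ν (m ν + 1)) - chiL L m) * ψ (Function.update m ν (m ν + 1)) +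
     (chiL L (Function.update m ν (m ν - 1)) - chiL L m) * ψ (Function.update m ν (m ν - 1)))

/-- The unitary time evolution `e^{-itH}`. -/
def timeEv {d : ℕ} (H : L2 d →L[ℂ] L2 d) (t : ℝ) : L2 d →L[ℂ] L2 d :=
  NormedSpace.exp ((-(t : ℂ) * I) • H)


namespace EBLB

variable {d : ℕ}

def nb (m : Site d) (ν : Fin d) (s : ℤ) : Site d := Function.update m ν (m ν + s)

lemma nb_apply (m : Site d) (ν : Fin d) (s : ℤ) (μ : Fin d) :
    nb m ν s μ = if μ = ν then m ν + s else m μ := Function.update_apply m ν (m ν + s) μ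

lemma nb_nb (m : Site d) (ν : Fin d) (s : ℤ) : nb (nb m ν s) ν (-s) = m := by
  funext μ
  by_cases h : μ = ν
  · subst h; simp [nb_apply]
  · simp [nb_apply, h]

lemma nb_inj (ν : Fin d) (s : ℤ) : Function.Injective fun m : Site d => nb m ν s :=
  Function.LeftInverse.injective (g := fun m => nb m ν (-s)) fun m => nb_nb m ν s

variable (n₀ : Site d) (L : ℕ)

def inside (m : Site d) : Prop := supN (m - n₀) ≤ L

instance : DecidablePred (inside n₀ L) := fun _ => by unfold inside; infer_instance

lemma inside_iff {m : Site d} : inside n₀ L m ↔ ∀ μ, (m μ - n₀ μ).natAbs ≤ L := by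
  unfold inside supN
  rw [Finset.sup_le_iff]
  simp [Pi.sub_apply]

lemma le_supN (x : Site d) (ν : Fin d) : (x ν).natAbs ≤ supN x := by
  unfold supN
  exact Finset.le_sup (f := fun ν => (x ν).natAbs) (Finset.mem_univ ν)

lemma inside_nb_iff {m : Site d} {ν : Fin d} {s : ℤ} :
    inside n₀ L (nb m ν s) ↔
      ((m ν + s - n₀ ν).natAbs ≤ L ∧ ∀ μ, μ ≠ ν → (m μ - n₀ μ).natAbs ≤ L) := by
  rw [inside_iff]
  constructor
  · intro h
    refine ⟨by simpa [nb_apply] using h ν, fun μ hμ => by simpa [nb_apply, hμ] using h μ⟩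
  · rintro ⟨h1, h2⟩ μ
    by_cases hμ : μ = ν
    · subst hμ; simpa [nb_apply] using h1
    · simpa [nb_apply, hμ] using h2 μ hμ

def chi (m : Site d) : ℂ := if inside n₀ L m then 1 else 0

lemma chi_eq_of_iff {a b : Site d} (h : inside n₀ L a ↔ inside n₀ L b) :
    chi n₀ L a = chi n₀ L b := by
  unfold chi; by_cases ha : inside n₀ L a
  · rw [if_pos ha, if_pos (h.mp ha)]
  · rw [if_neg ha, if_neg (fun hb => ha (h.mpr hb))]

lemma not_iff_of_chi_ne {a b : Site d} (h : chi n₀ L a ≠ chi n₀ L b) :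
    ¬ (inside n₀ L a ↔ inside n₀ L b) := fun hiff => h (chi_eq_of_iff n₀ L hiff)

lemma norm_chi_sub_le (a b : Site d) : ‖chi n₀ L a - chi n₀ L b‖ ≤ 1 := by
  unfold chi; split_ifs <;> simp

lemma level_of_ne {m : Site d} {ν : Fin d} {s : ℤ} (hs : s = 1 ∨ s = -1)
    (h : ¬ (inside n₀ L m ↔ inside n₀ L (nb m ν s))) :
    supN (m - n₀) = L ∨ supN (m - n₀) = L + 1 := by
  by_cases hm : inside n₀ L m
  · left
    have hm' : ¬ inside n₀ L (nb m ν s) := fun h' => h (iff_of_true hm h')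
    rw [inside_nb_iff] at hm'
    have h1 := (inside_iff n₀ L).mp hm
    have hA : ¬ ((m ν + s - n₀ ν).natAbs ≤ L) := by
      intro hA
      have h2 := not_and.mp hm' hA
      push_neg at h2
      obtain ⟨μ, hμν, hgt⟩ := h2
      exact absurd (h1 μ) (by omega)
    have hν := h1 ν
    have hLle : L ≤ ((m - n₀) ν).natAbs := by
      have : (m - n₀) ν = m ν - n₀ ν := rfl
      rw [this]
      rcases hs with rfl | rfl <;> omega
    exact le_antisymm hm (hLle.trans (le_supN _ ν))
  · right
    have hm' : inside n₀ L (nb m ν s) := by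
      by_contra h'
      exact h (iff_of_false hm h')
    rw [inside_nb_iff] at hm'
    obtain ⟨hA, hB⟩ := hm'
    rw [inside_iff] at hm
    push_neg at hm
    obtain ⟨μ, hμ⟩ := hm
    have hμν : μ = ν := by
      by_contra hne
      exact absurd (hB μ hne) (by omega)
    subst hμν
    have hval : ((m - n₀) μ).natAbs = L + 1 := by
      have h0 : (m - n₀) μ = m μ - n₀ μ := rfl
      rw [h0]
      rcases hs with rfl | rfl <;> omega
    refine le_antisymm ?_ (by rw [← hval]; exact le_supN _ μ)
    unfold supN
    refine Finset.sup_le fun ν' _ => ?_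
    have h2 : (m - n₀) ν' = m ν' - n₀ ν' := rfl
    by_cases h' : ν' = μ
    · subst h'
      rcases hs with rfl | rfl <;> omega
    · have := hB ν' h'
      omega

lemma not_both_ne (hL : 1 ≤ L) (m : Site d) (ν : Fin d)
    (h1 : ¬ (inside n₀ L m ↔ inside n₀ L (nb m ν 1)))
    (h2 : ¬ (inside n₀ L m ↔ inside n₀ L (nb m ν (-1)))) : False := by
  by_cases hm : inside n₀ L m
  · have g1 : ¬ inside n₀ L (nb m ν 1) := fun h' => h1 (iff_of_true hm h')
    have g2 : ¬ inside n₀ L (nb m ν (-1)) := fun h' => h2 (iff_of_true hm h')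
    rw [inside_nb_iff] at g1 g2
    have hall := (inside_iff n₀ L).mp hm
    have e1 : ¬ ((m ν + 1 - n₀ ν).natAbs ≤ L) := by
      intro hA
      have h2' := not_and.mp g1 hA
      push_neg at h2'
      obtain ⟨μ, _, hgt⟩ := h2'
      exact absurd (hall μ) (by omega)
    have e2 : ¬ ((m ν + (-1) - n₀ ν).natAbs ≤ L) := by
      intro hA
      have h2' := not_and.mp g2 hA
      push_neg at h2'
      obtain ⟨μ, _, hgt⟩ := h2'
      exact absurd (hall μ) (by omega)
    have := hall ν
    omega
  · have g1 : inside n₀ L (nb m ν 1) := by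
      by_contra h'
      exact h1 (iff_of_false hm h')
    have g2 : inside n₀ L (nb m ν (-1)) := by
      by_contra h'
      exact h2 (iff_of_false hm h')
    rw [inside_nb_iff] at g1 g2
    apply hm
    rw [inside_iff]
    intro μ
    by_cases hμ : μ = ν
    · subst hμ
      have := g1.1
      have := g2.1
      omega
    · exact g1.2 μ hμ

end EBLB

namespace EBLB

variable {d : ℕ} (n₀ : Site d) (L : ℕ)

/-- The boundary predicate. -/
def bpred (n : Site d) : Prop := supN (n - n₀) = L ∨ supN (n - n₀) = L + 1

instance : DecidablePred (bpred n₀ L) := fun _ => by unfold bpred; infer_instance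

lemma coeff_le {s : ℤ} (hs : s = 1 ∨ s = -1) (n : Site d) (ν : Fin d) :
    ‖chi n₀ L (nb n ν s) - chi n₀ L n‖ ≤ if bpred n₀ L n then 1 else 0 := by
  by_cases hB : bpred n₀ L n
  · rw [if_pos hB]
    exact norm_chi_sub_le n₀ L _ _
  · rw [if_neg hB]
    have hiff : inside n₀ L n ↔ inside n₀ L (nb n ν s) := by
      by_contra hne
      exact hB (level_of_ne n₀ L hs hne)
    rw [chi_eq_of_iff n₀ L hiff.symm, sub_self, norm_zero]

lemma coeff_sum_le (hL : 1 ≤ L) (n : Site d) (ν : Fin d) :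
    ‖chi n₀ L (nb n ν 1) - chi n₀ L n‖ + ‖chi n₀ L (nb n ν (-1)) - chi n₀ L n‖ ≤
      if bpred n₀ L n then 1 else 0 := by
  by_cases hB : bpred n₀ L n
  · rw [if_pos hB]
    by_cases hiff : inside n₀ L n ↔ inside n₀ L (nb n ν 1)
    · rw [chi_eq_of_iff n₀ L hiff.symm, sub_self, norm_zero, zero_add]
      exact norm_chi_sub_le n₀ L _ _
    · have hiff2 : inside n₀ L n ↔ inside n₀ L (nb n ν (-1)) := by
        by_contra h2
        exact not_both_ne n₀ L hL n ν hiff h2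
      rw [chi_eq_of_iff n₀ L hiff2.symm, sub_self, norm_zero, add_zero]
      exact norm_chi_sub_le n₀ L _ _
  · rw [if_neg hB]
    have hiff : inside n₀ L n ↔ inside n₀ L (nb n ν 1) := by
      by_contra hne; exact hB (level_of_ne n₀ L (Or.inl rfl) hne)
    have hiff2 : inside n₀ L n ↔ inside n₀ L (nb n ν (-1)) := by
      by_contra hne; exact hB (level_of_ne n₀ L (Or.inr rfl) hne)
    rw [chi_eq_of_iff n₀ L hiff.symm, chi_eq_of_iff n₀ L hiff2.symm]
    simp

def box (r : ℕ) : Finset (Site d) :=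
  Fintype.piFinset fun ν => Finset.Icc (n₀ ν - (r : ℤ)) (n₀ ν + (r : ℤ))

lemma mem_box {r : ℕ} {n : Site d} : n ∈ box n₀ r ↔ inside n₀ r n := by
  rw [box, Fintype.mem_piFinset, inside_iff]
  refine forall_congr' fun μ => ?_
  rw [Finset.mem_Icc]
  omega

lemma bpred_mem_box {n : Site d} (h : bpred n₀ L n) : n ∈ box n₀ (L + 1) := by
  rw [mem_box]
  show supN (n - n₀) ≤ L + 1
  rcases h with h | h <;> omega

end EBLB

namespace EBLB

variable {d : ℕ} (n₀ : Site d) (L : ℕ)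

lemma dl_apply (n m : Site d) : (dl n : ∀ _ : Site d, ℂ) m = if m = n then 1 else 0 := by
  rcases eq_or_ne m n with rfl | h
  · rw [if_pos rfl]; exact lp.single_apply_self 2 m 1
  · rw [if_neg h]; exact lp.single_apply_ne 2 n 1 h

lemma coe_sum_single (f : Site d → ℂ) (S : Finset (Site d)) (m : Site d) :
    ((∑ n ∈ S, f n • dl n : L2 d) : ∀ _ : Site d, ℂ) m = if m ∈ S then f m else 0 := by
  rw [lp.coeFn_sum, Finset.sum_apply]
  have : ∀ n ∈ S, (⇑(f n • dl n) : ∀ _ : Site d, ℂ) m = if m = n then f n else 0 := by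
    intro n _
    rw [lp.coeFn_smul, Pi.smul_apply, dl_apply, smul_eq_mul]
    split_ifs <;> simp
  rw [Finset.sum_congr rfl this, Finset.sum_ite_eq S m f]

lemma R_eq (V : Site d → ℝ) (E : ℂ) (ψ : Site d → ℂ) (hψ : ∀ n, schrOp V ψ n = E * ψ n)
    (m : Site d) :
    schrOp V (fun k => chi n₀ L k * ψ k) m - E * (chi n₀ L m * ψ m) =
      ∑ ν : Fin d, ((chi n₀ L (nb m ν 1) - chi n₀ L m) * ψ (nb m ν 1) +
        (chi n₀ L (nb m ν (-1)) - chi n₀ L m) * ψ (nb m ν (-1))) := by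
  have hlap := hψ m
  unfold schrOp lapOp at hlap ⊢
  have hnb1 : ∀ ν : Fin d, nb m ν 1 = Function.update m ν (m ν + 1) := fun ν => rfl
  have hnbm : ∀ ν : Fin d, nb m ν (-1) = Function.update m ν (m ν - 1) := fun ν => by
    unfold nb; rw [sub_eq_add_neg]
  simp only [hnb1, hnbm] at *
  simp only [sub_mul, Finset.sum_add_distrib, Finset.sum_sub_distrib,
    ← Finset.mul_sum] at *
  linear_combination (chi n₀ L m) * hlap

lemma chi_far {m : Site d} (h : ¬ inside n₀ (L + 1) m) : chi n₀ L m = 0 := by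
  rw [chi, if_neg]
  intro hin
  exact h (by unfold inside at hin ⊢; omega)

lemma chi_nb_far {m : Site d} (h : ¬ inside n₀ (L + 1) m) {ν : Fin d} {s : ℤ}
    (hs : s = 1 ∨ s = -1) : chi n₀ L (nb m ν s) = 0 := by
  rw [chi, if_neg]
  intro hin
  rw [inside_nb_iff] at hin
  obtain ⟨h1, h2⟩ := hin
  apply h
  rw [inside_iff]
  intro μ
  by_cases hμ : μ = ν
  · subst hμ; rcases hs with rfl | rfl <;> omega
  · have := h2 μ hμ; omega

lemma count (ψ : Site d → ℂ) (κ : ℝ) (hκ : 0 ≤ κ)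
    (hpt : ∀ (n : Site d) (ν : Fin d),
      ‖chi n₀ L (nb n ν 1) - chi n₀ L n‖ + ‖chi n₀ L (nb n ν (-1)) - chi n₀ L n‖ ≤
        if bpred n₀ L n then κ else 0) :
    ∑ m ∈ box n₀ (L + 1), ‖∑ ν : Fin d,
        ((chi n₀ L (nb m ν 1) - chi n₀ L m) * ψ (nb m ν 1) +
         (chi n₀ L (nb m ν (-1)) - chi n₀ L m) * ψ (nb m ν (-1)))‖ ≤
      (d : ℝ) * (κ * ∑ n ∈ (box n₀ (L + 1)).filter (bpred n₀ L), ‖ψ n‖) := by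
  classical
  set T := box n₀ (L + 1) with hT
  set B := T.filter (bpred n₀ L) with hB
  set S : ℝ := ∑ n ∈ B, ‖ψ n‖ with hS
  have hSnn : 0 ≤ S := Finset.sum_nonneg fun _ _ => norm_nonneg _
  set g : Fin d → ℤ → Site d → ℝ :=
    fun ν s n => ‖chi n₀ L (nb n ν (-s)) - chi n₀ L n‖ * ‖ψ n‖ with hgdef
  have hg : ∀ (ν : Fin d) (s : ℤ) (m : Site d),
      ‖chi n₀ L (nb m ν s) - chi n₀ L m‖ * ‖ψ (nb m ν s)‖ = g ν s (nb m ν s) := by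
    intro ν s m
    simp only [hgdef]
    rw [nb_nb, norm_sub_rev]
  have step1 : ∑ m ∈ T, ‖∑ ν : Fin d,
      ((chi n₀ L (nb m ν 1) - chi n₀ L m) * ψ (nb m ν 1) +
       (chi n₀ L (nb m ν (-1)) - chi n₀ L m) * ψ (nb m ν (-1)))‖ ≤
      ∑ m ∈ T, ∑ ν : Fin d, (g ν 1 (nb m ν 1) + g ν (-1) (nb m ν (-1))) := by
    refine Finset.sum_le_sum fun m _ => ?_
    refine (norm_sum_le _ _).trans (Finset.sum_le_sum fun ν _ => ?_)
    refine (norm_add_le _ _).trans ?_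
    rw [norm_mul, norm_mul, hg, hg]
  refine step1.trans ?_
  rw [Finset.sum_comm]
  have hdS : ∑ _ν : Fin d, (κ * S) = (d : ℝ) * (κ * S) := by
    rw [Finset.sum_const, Finset.card_univ, Fintype.card_fin, nsmul_eq_mul]
  rw [← hdS]
  refine Finset.sum_le_sum fun ν _ => ?_
  -- fixed ν
  set W : Finset (Site d) := (T.image fun m => nb m ν 1) ∪ (T.image fun m => nb m ν (-1))
    with hW
  have hgnn : ∀ (s : ℤ) (n : Site d), 0 ≤ g ν s n := fun s n =>
    mul_nonneg (norm_nonneg _) (norm_nonneg _)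
  have h1 : ∑ m ∈ T, g ν 1 (nb m ν 1) ≤ ∑ n ∈ W, g ν 1 n := by
    rw [← Finset.sum_image (fun x _ y _ h => nb_inj ν 1 h)]
    exact Finset.sum_le_sum_of_subset_of_nonneg Finset.subset_union_left
      (fun n _ _ => hgnn 1 n)
  have h2 : ∑ m ∈ T, g ν (-1) (nb m ν (-1)) ≤ ∑ n ∈ W, g ν (-1) n := by
    rw [← Finset.sum_image (fun x _ y _ h => nb_inj ν (-1) h)]
    exact Finset.sum_le_sum_of_subset_of_nonneg Finset.subset_union_right
      (fun n _ _ => hgnn (-1) n)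
  rw [Finset.sum_add_distrib]
  refine (add_le_add h1 h2).trans ?_
  rw [← Finset.sum_add_distrib]
  have h3 : ∑ n ∈ W, (g ν 1 n + g ν (-1) n) ≤
      ∑ n ∈ W, (if bpred n₀ L n then κ else 0) * ‖ψ n‖ := by
    refine Finset.sum_le_sum fun n _ => ?_
    have := hpt n ν
    simp only [hgdef]
    have hrw : (-1 : ℤ) = -(1 : ℤ) := rfl
    rw [← add_mul]
    refine mul_le_mul_of_nonneg_right ?_ (norm_nonneg _)
    calc ‖chi n₀ L (nb n ν (-1)) - chi n₀ L n‖ + ‖chi n₀ L (nb n ν (-(-1))) - chi n₀ L n‖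
        = ‖chi n₀ L (nb n ν 1) - chi n₀ L n‖ + ‖chi n₀ L (nb n ν (-1)) - chi n₀ L n‖ := by
          norm_num [add_comm]
      _ ≤ _ := hpt n ν
  refine h3.trans ?_
  have h4 : ∑ n ∈ W, (if bpred n₀ L n then κ else 0) * ‖ψ n‖ =
      ∑ n ∈ W.filter (bpred n₀ L), κ * ‖ψ n‖ := by
    rw [Finset.sum_filter]
    refine Finset.sum_congr rfl fun n _ => ?_
    split_ifs <;> simp
  rw [h4]
  have h5 : W.filter (bpred n₀ L) ⊆ B := by
    intro n hn
    rw [Finset.mem_filter] at hn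
    rw [hB, Finset.mem_filter]
    exact ⟨bpred_mem_box n₀ L hn.2, hn.2⟩
  calc ∑ n ∈ W.filter (bpred n₀ L), κ * ‖ψ n‖
      ≤ ∑ n ∈ B, κ * ‖ψ n‖ := Finset.sum_le_sum_of_subset_of_nonneg h5
        (fun n _ _ => mul_nonneg hκ (norm_nonneg _))
    _ = κ * S := by rw [hS, Finset.mul_sum]

end EBLB

open scoped Pointwise

set_option maxHeartbeats 2000000 in
open EBLB in
/-- If the Combes–Thomas estimate holds at `E ∉ σ(H)` (with
`δ = dist(E, σ(H))`, constant `c > 0`) and `ψ` is a generalized eigenfunction with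
generalized eigenvalue `E`, then for every `L` and `n₀`:
`∑_{n ∈ ∂̄Λ_L(n₀)} |ψ(n)| ≥ (δ/(2d)) e^{cδL} |ψ(n₀)|`. -/
theorem eigenfunction_boundary_lower_bound {d : ℕ} (V : Site d → ℝ)
    (H : L2 d →L[ℂ] L2 d) (hH : IsSchrodingerOp H V) (hSA : IsSelfAdjoint H)
    (E : ℝ) (hE : (E : ℂ) ∉ spectrum ℂ H)
    (δ : ℝ) (hδ : δ = Metric.infDist (E : ℂ) (spectrum ℂ H))
    (c : ℝ) (hc : 0 < c)
    (hCT : ∀ n m : Site d,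
      ‖grn H (E : ℂ) n m‖ ≤ (2 / δ) * Real.exp (-c * δ * (supN (n - m) : ℝ)))
    (ψ : Site d → ℂ) (hψ : ∀ n, schrOp V ψ n = (E : ℂ) * ψ n)
    (L : ℕ) (n₀ : Site d) :
    (δ / (2 * d)) * Real.exp (c * δ * L) * ‖ψ n₀‖ ≤
      ∑' n : {n : Site d // supN (n - n₀) = L ∨ supN (n - n₀) = L + 1}, ‖ψ (n : Site d)‖ := by
  classical
  rcases Nat.eq_zero_or_pos d with hd0 | hd
  · subst hd0
    simp only [Nat.cast_zero, mul_zero, div_zero, zero_mul]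
    exact tsum_nonneg fun n => norm_nonneg _
  -- setup
  set χ : Site d → ℂ := chi n₀ L with hχ
  set R : Site d → ℂ := fun m => schrOp V (fun k => χ k * ψ k) m - (E : ℂ) * (χ m * ψ m)
    with hR
  set T : Finset (Site d) := box n₀ (L + 1) with hT
  set Bf : Finset (Site d) := T.filter (bpred n₀ L) with hBf
  set S : ℝ := ∑ n ∈ Bf, ‖ψ n‖ with hS
  set Φ : L2 d := ∑ n ∈ box n₀ L, ψ n • dl n with hΦ
  set Ψ : L2 d := ∑ m ∈ T, R m • dl m with hΨ
  set a : L2 d →L[ℂ] L2 d := H - (E : ℂ) • 1 with ha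
  have hUnit : IsUnit a := by
    have h1 := spectrum.notMem_iff.mp hE
    rw [Algebra.algebraMap_eq_smul_one] at h1
    have h2 := h1.neg
    rwa [neg_sub] at h2
  have hdl : dl n₀ ≠ (0 : L2 d) := by
    intro h
    have h2 : (dl n₀ : ∀ _ : Site d, ℂ) n₀ = 0 := by rw [h]; simp
    rw [dl_apply] at h2
    simp at h2
  haveI hnt2 : Nontrivial (L2 d) := ⟨dl n₀, 0, hdl⟩
  haveI hnt3 : Nontrivial (L2 d →L[ℂ] L2 d) := by
    refine ⟨1, 0, fun h => hdl ?_⟩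
    have h2 := congrArg (fun (T : L2 d →L[ℂ] L2 d) => T (dl n₀)) h
    simpa using h2
  have δpos : 0 < δ := by
    rw [hδ]
    exact ((spectrum.isClosed (𝕜 := ℂ) H).notMem_iff_infDist_pos (spectrum.nonempty H)).mp hE
  have hSnn : 0 ≤ S := Finset.sum_nonneg fun _ _ => norm_nonneg _
  have hΦcoe : ∀ m, (Φ : ∀ _ : Site d, ℂ) m = χ m * ψ m := by
    intro m
    rw [hΦ, coe_sum_single, hχ]
    by_cases hm : inside n₀ L m
    · rw [if_pos ((mem_box n₀).mpr hm), chi, if_pos hm, one_mul]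
    · rw [if_neg (fun hmem => hm ((mem_box n₀).mp hmem)), chi, if_neg hm, zero_mul]
  have hΨcoe : ∀ m, (Ψ : ∀ _ : Site d, ℂ) m = if m ∈ T then R m else 0 := fun m => by
    rw [hΨ, coe_sum_single]
  have hRbd : ∀ m, R m = ∑ ν : Fin d,
      ((χ (nb m ν 1) - χ m) * ψ (nb m ν 1) + (χ (nb m ν (-1)) - χ m) * ψ (nb m ν (-1))) := by
    intro m
    simp only [hR, hχ]
    exact R_eq n₀ L V E ψ hψ m
  have hRfar : ∀ m, m ∉ T → R m = 0 := by
    intro m hm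
    have hfar : ¬ inside n₀ (L + 1) m := fun hin => hm ((mem_box n₀).mpr hin)
    rw [hRbd m]
    refine Finset.sum_eq_zero fun ν _ => ?_
    rw [hχ, chi_far n₀ L hfar, chi_nb_far n₀ L hfar (Or.inl rfl),
      chi_nb_far n₀ L hfar (Or.inr rfl)]
    ring
  have haΦ : a Φ = Ψ := by
    refine lp.ext (funext fun m => ?_)
    have h1 : a Φ = H Φ - (E : ℂ) • Φ := by
      rw [ha, ContinuousLinearMap.sub_apply, ContinuousLinearMap.smul_apply,
        ContinuousLinearMap.one_apply]
    rw [h1, lp.coeFn_sub, Pi.sub_apply, lp.coeFn_smul, Pi.smul_apply]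
    rw [hH.2 Φ m]
    have h2 : (fun k => (Φ : ∀ _ : Site d, ℂ) k) = fun k => χ k * ψ k := funext hΦcoe
    rw [h2, hΦcoe m, hΨcoe m, smul_eq_mul]
    by_cases hm : m ∈ T
    · rw [if_pos hm]
    · rw [if_neg hm]
      have h3 := hRfar m hm
      simp only [hR] at h3
      linear_combination h3
  have hresΨ : res H (E : ℂ) Ψ = Φ := by
    rw [← haΦ]
    show Ring.inverse a (a Φ) = Φ
    rw [← ContinuousLinearMap.mul_apply, Ring.inverse_mul_cancel a hUnit,
      ContinuousLinearMap.one_apply]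
  have hχn₀ : χ n₀ = 1 := by
    have hin : inside n₀ L n₀ := by
      rw [inside_iff]
      intro μ
      simp
    rw [hχ, chi, if_pos hin]
  have hψΦ : ψ n₀ = (Φ : ∀ _ : Site d, ℂ) n₀ := by rw [hΦcoe n₀, hχn₀, one_mul]
  -- the tsum is the finite boundary sum
  have hfin : {n : Site d | supN (n - n₀) = L ∨ supN (n - n₀) = L + 1}.Finite := by
    refine Set.Finite.subset T.finite_toSet fun n hn => ?_
    exact Finset.mem_coe.mpr (bpred_mem_box n₀ L hn)
  haveI hFT : Fintype {n : Site d // supN (n - n₀) = L ∨ supN (n - n₀) = L + 1} :=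
    hfin.fintype
  have htsum : ∑' n : {n : Site d // supN (n - n₀) = L ∨ supN (n - n₀) = L + 1},
      ‖ψ (n : Site d)‖ = S := by
    rw [tsum_fintype, hS, hBf]
    exact (Finset.sum_subtype
      (p := fun n => supN (n - n₀) = L ∨ supN (n - n₀) = L + 1) _
      (fun n => ⟨fun h => (Finset.mem_filter.mp h).2,
        fun h => Finset.mem_filter.mpr ⟨bpred_mem_box n₀ L h, h⟩⟩)
      fun n => ‖ψ n‖).symm
  rw [htsum]
  have hcnt : ∀ κ : ℝ, 0 ≤ κ →
      (∀ (n : Site d) (ν : Fin d), ‖χ (nb n ν 1) - χ n‖ + ‖χ (nb n ν (-1)) - χ n‖ ≤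
        if bpred n₀ L n then κ else 0) →
      ∑ m ∈ T, ‖R m‖ ≤ (d : ℝ) * (κ * S) := by
    intro κ hκ hpt
    simp only [hχ] at hpt
    have h0 := count n₀ L ψ κ hκ hpt
    calc ∑ m ∈ T, ‖R m‖
        = ∑ m ∈ T, ‖∑ ν : Fin d, ((chi n₀ L (nb m ν 1) - chi n₀ L m) * ψ (nb m ν 1) +
            (chi n₀ L (nb m ν (-1)) - chi n₀ L m) * ψ (nb m ν (-1)))‖ := by
          refine Finset.sum_congr rfl fun m _ => ?_
          rw [hRbd m, hχ]
      _ ≤ _ := h0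
  have hdpos : (0 : ℝ) < d := by exact_mod_cast hd
  rcases Nat.eq_zero_or_pos L with hL0 | hL1
  · -- L = 0 : use the resolvent norm bound
    have hpt : ∀ (n : Site d) (ν : Fin d),
        ‖χ (nb n ν 1) - χ n‖ + ‖χ (nb n ν (-1)) - χ n‖ ≤
          if bpred n₀ L n then (2 : ℝ) else 0 := by
      intro n ν
      have c1 := coeff_le n₀ L (Or.inl rfl) n ν
      have c2 := coeff_le n₀ L (Or.inr rfl) n ν
      simp only [hχ]
      by_cases hB : bpred n₀ L n
      · rw [if_pos hB] at c1 c2 ⊢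
        linarith
      · rw [if_neg hB] at c1 c2 ⊢
        linarith
    have hRsum : ∑ m ∈ T, ‖R m‖ ≤ (d : ℝ) * (2 * S) := hcnt 2 (by norm_num) hpt
    -- self-adjointness of the resolvent
    have hsa : IsSelfAdjoint a := by
      rw [ha]
      refine hSA.sub ?_
      rw [IsSelfAdjoint, star_smul, star_one, Complex.star_def, Complex.conj_ofReal]
    have hsb : IsSelfAdjoint (res H (E : ℂ)) := by
      show IsSelfAdjoint (Ring.inverse a)
      rw [IsSelfAdjoint, ← Ring.inverse_star, hsa.star_eq]
    -- spectrum of the resolvent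
    have hz : ∀ z ∈ spectrum ℂ (res H (E : ℂ)), ‖z‖ ≤ δ⁻¹ := by
      intro z hz
      have hua : ((hUnit.unit : (L2 d →L[ℂ] L2 d)ˣ) : L2 d →L[ℂ] L2 d) = a :=
        hUnit.unit_spec
      have hbu : res H (E : ℂ) =
          ((hUnit.unit⁻¹ : (L2 d →L[ℂ] L2 d)ˣ) : L2 d →L[ℂ] L2 d) := by
        show Ring.inverse a = _
        conv_lhs => rw [← hua]
        exact Ring.inverse_unit hUnit.unit
      rw [hbu] at hz
      have hz0 : z ≠ 0 := spectrum.ne_zero_of_mem_of_unit hz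
      have hzinv : (z⁻¹ : ℂ) ∈ spectrum ℂ
          ((hUnit.unit : (L2 d →L[ℂ] L2 d)ˣ) : L2 d →L[ℂ] L2 d) := by
        have h5 := (spectrum.inv_mem_iff
          (r := (Units.mk0 z hz0)⁻¹) (a := hUnit.unit)).mpr (by simpa using hz)
        simpa using h5
      rw [hua] at hzinv
      have hset : z⁻¹ ∈ spectrum ℂ H - {(E : ℂ)} := by
        rw [spectrum.sub_singleton_eq]
        rwa [Algebra.algebraMap_eq_smul_one]
      obtain ⟨x, hx, y, hy, hxy⟩ := Set.mem_sub.mp hset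
      rw [Set.mem_singleton_iff] at hy
      subst hy
      have hd1 : δ ≤ ‖(E : ℂ) - x‖ := by
        rw [hδ]
        have h6 := Metric.infDist_le_dist_of_mem (x := ((E : ℝ) : ℂ)) hx
        rwa [dist_eq_norm] at h6
      have h7 : ‖(E : ℂ) - x‖ = ‖z‖⁻¹ := by
        rw [show (E : ℂ) - x = -(x - (E : ℂ)) by ring, norm_neg, hxy, norm_inv]
      rw [h7] at hd1
      have hznorm : 0 < ‖z‖ := norm_pos_iff.mpr hz0
      calc ‖z‖ = (‖z‖⁻¹)⁻¹ := (inv_inv _).symm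
        _ ≤ δ⁻¹ := by
            exact inv_anti₀ δpos hd1
    have hrad : spectralRadius ℂ (res H (E : ℂ)) ≤ ENNReal.ofReal δ⁻¹ := by
      unfold spectralRadius
      refine iSup₂_le fun z hz' => ?_
      rw [show ((‖z‖₊ : ℝ≥0∞)) = ENNReal.ofReal ‖z‖ from (ofReal_norm z).symm]
      exact ENNReal.ofReal_le_ofReal (hz z hz')
    rw [hsb.spectralRadius_eq_nnnorm] at hrad
    have hres_norm : ‖res H (E : ℂ)‖ ≤ δ⁻¹ := by
      rw [show ((‖res H (E : ℂ)‖₊ : ℝ≥0∞)) = ENNReal.ofReal ‖res H (E : ℂ)‖ from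
        (ofReal_norm _).symm] at hrad
      exact (ENNReal.ofReal_le_ofReal_iff (inv_nonneg.mpr δpos.le)).mp hrad
    have hΨnorm : ‖Ψ‖ ≤ ∑ m ∈ T, ‖R m‖ := by
      rw [hΨ]
      refine (norm_sum_le _ _).trans (Finset.sum_le_sum fun m _ => ?_)
      rw [norm_smul]
      have hone : ‖dl m‖ = 1 := by
        have h8 := lp.norm_single (p := 2) (E := fun _ : Site d => ℂ) (by norm_num)
          m (1 : ℂ)
        exact h8.trans norm_one
      rw [hone, mul_one]
    have hb2 : ‖ψ n₀‖ ≤ δ⁻¹ * ((d : ℝ) * (2 * S)) := by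
      calc ‖ψ n₀‖ = ‖(Φ : ∀ _ : Site d, ℂ) n₀‖ := by rw [hψΦ]
        _ ≤ ‖Φ‖ := lp.norm_apply_le_norm (by norm_num) Φ n₀
        _ = ‖res H (E : ℂ) Ψ‖ := by rw [hresΨ]
        _ ≤ ‖res H (E : ℂ)‖ * ‖Ψ‖ := ContinuousLinearMap.le_opNorm _ _
        _ ≤ δ⁻¹ * (∑ m ∈ T, ‖R m‖) := by
            refine mul_le_mul hres_norm hΨnorm (norm_nonneg _) (inv_nonneg.mpr δpos.le)
        _ ≤ δ⁻¹ * ((d : ℝ) * (2 * S)) := by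
            exact mul_le_mul_of_nonneg_left hRsum (inv_nonneg.mpr δpos.le)
    rw [hL0]
    simp only [Nat.cast_zero, mul_zero, Real.exp_zero, mul_one]
    have key : δ / (2 * (d : ℝ)) * (δ⁻¹ * ((d : ℝ) * (2 * S))) = S := by
      field_simp
    calc δ / (2 * (d : ℝ)) * ‖ψ n₀‖
        ≤ δ / (2 * (d : ℝ)) * (δ⁻¹ * ((d : ℝ) * (2 * S))) := by
          refine mul_le_mul_of_nonneg_left hb2 ?_
          exact div_nonneg δpos.le (by positivity)
      _ = S := key
  · -- L ≥ 1 : Combes-Thomas route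
    have hpt : ∀ (n : Site d) (ν : Fin d),
        ‖χ (nb n ν 1) - χ n‖ + ‖χ (nb n ν (-1)) - χ n‖ ≤
          if bpred n₀ L n then (1 : ℝ) else 0 := by
      intro n ν
      simp only [hχ]
      exact coeff_sum_le n₀ L hL1 n ν
    have hRsum : ∑ m ∈ T, ‖R m‖ ≤ (d : ℝ) * (1 * S) := hcnt 1 one_pos.le hpt
    have hinner : ∀ f : L2 d, (inner ℂ (dl n₀) f : ℂ) = (f : ∀ _ : Site d, ℂ) n₀ := by
      intro f
      simp only [dl]
      rw [lp.inner_single_left]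
      simp [RCLike.inner_apply]
    have hgreen : ψ n₀ = ∑ m ∈ T, R m * grn H (E : ℂ) m n₀ := by
      rw [hψΦ, ← hresΨ, hΨ, map_sum, ← hinner, inner_sum]
      refine Finset.sum_congr rfl fun m _ => ?_
      rw [_root_.map_smul, inner_smul_right]
      rfl
    have hb1 : ‖ψ n₀‖ ≤ ∑ m ∈ T, ‖R m‖ * ((2 / δ) * Real.exp (-c * δ * L)) := by
      rw [hgreen]
      refine (norm_sum_le _ _).trans (Finset.sum_le_sum fun m _ => ?_)
      rw [norm_mul]
      by_cases hm : R m = 0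
      · simp [hm]
      · have hlev : L ≤ supN (m - n₀) := by
          rw [hRbd m] at hm
          obtain ⟨ν, _, hν⟩ := Finset.exists_ne_zero_of_sum_ne_zero hm
          have hne : χ (nb m ν 1) ≠ χ m ∨ χ (nb m ν (-1)) ≠ χ m := by
            by_contra hcon
            push_neg at hcon
            rw [hcon.1, hcon.2, sub_self, zero_mul, zero_mul, add_zero] at hν
            exact hν rfl
          have hl : supN (m - n₀) = L ∨ supN (m - n₀) = L + 1 := by
            rcases hne with h | h
            · exact level_of_ne n₀ L (Or.inl rfl)
                (not_iff_of_chi_ne n₀ L (by simp only [hχ] at h; exact h.symm))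
            · exact level_of_ne n₀ L (Or.inr rfl)
                (not_iff_of_chi_ne n₀ L (by simp only [hχ] at h; exact h.symm))
          omega
        refine mul_le_mul_of_nonneg_left ((hCT m n₀).trans ?_) (norm_nonneg _)
        have h2 : (-c) * δ * ((supN (m - n₀) : ℕ) : ℝ) ≤ (-c) * δ * (L : ℝ) := by
          have hcast : (L : ℝ) ≤ ((supN (m - n₀) : ℕ) : ℝ) := Nat.cast_le.mpr hlev
          nlinarith [mul_pos hc δpos]
        exact mul_le_mul_of_nonneg_left (Real.exp_le_exp.mpr h2)
          (div_nonneg (by norm_num) δpos.le)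
    have hb2 : ‖ψ n₀‖ ≤ (2 / δ) * Real.exp (-c * δ * L) * ((d : ℝ) * S) := by
      calc ‖ψ n₀‖ ≤ ∑ m ∈ T, ‖R m‖ * ((2 / δ) * Real.exp (-c * δ * L)) := hb1
        _ = (∑ m ∈ T, ‖R m‖) * ((2 / δ) * Real.exp (-c * δ * L)) := by
            rw [Finset.sum_mul]
        _ ≤ ((d : ℝ) * (1 * S)) * ((2 / δ) * Real.exp (-c * δ * L)) := by
            refine mul_le_mul_of_nonneg_right hRsum ?_
            exact mul_nonneg (div_nonneg (by norm_num) δpos.le) (Real.exp_pos _).le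
        _ = (2 / δ) * Real.exp (-c * δ * L) * ((d : ℝ) * S) := by ring
    have key : δ / (2 * (d : ℝ)) * Real.exp (c * δ * L) *
        ((2 / δ) * Real.exp (-c * δ * L) * ((d : ℝ) * S)) = S := by
      rw [show (-c * δ * (L : ℝ)) = -(c * δ * L) by ring, Real.exp_neg]
      have he := (Real.exp_pos (c * δ * (L : ℝ))).ne'
      field_simp
    calc δ / (2 * (d : ℝ)) * Real.exp (c * δ * L) * ‖ψ n₀‖
        ≤ δ / (2 * (d : ℝ)) * Real.exp (c * δ * L) *
            ((2 / δ) * Real.exp (-c * δ * L) * ((d : ℝ) * S)) := by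
          refine mul_le_mul_of_nonneg_left hb2 ?_
          exact mul_nonneg (div_nonneg δpos.le (by positivity)) (Real.exp_pos _).le
      _ = S := key
end
end

section
/- Let $m \ge 1$ and consider the free discrete Laplacian $H_0$ on $\mathbb{Z} \times \mathbb{Z}^m$, $H_0 u(x) = \sum_{|j|=1} u(x+j)$. For any $E \in (-2(m+1), 2(m+1))$ there exists a nonzero function $\psi : \mathbb{Z} \times \mathbb{Z}^m \to \mathbb{C}$ solving $H_0 \psi = E \psi$ pointwise such that $\sup_{k \in \mathbb{Z}} \sum_{n \in \mathbb{Z}^m} |\psi(k,n)|^2 < \infty$. -/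
noncomputable section
open Complex Real MeasureTheory Filter
open scoped ENNReal NNReal
open scoped ComplexInnerProductSpace

namespace FreeLap

variable (m : ℕ) (E : ℝ)

def box : Set (Fin m → ℝ) := Set.univ.pi fun _ => Set.Ioc (0:ℝ) (2*π)

def Sset : Set (Fin m → ℝ) := {θ | |E - ∑ ν, 2 * Real.cos (θ ν)| < 2} ∩ box m

def alp (θ : Fin m → ℝ) : ℝ := Real.arccos ((E - ∑ ν, 2 * Real.cos (θ ν)) / 2)

def ph (k : ℤ) (n : Site m) (θ : Fin m → ℝ) : ℝ :=
  (k : ℝ) * alp m E θ - ∑ ν, (n ν : ℝ) * θ ν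

def f (k : ℤ) (n : Site m) : (Fin m → ℝ) → ℂ :=
  (Sset m E).indicator fun θ => Complex.exp ((ph m E k n θ : ℝ) * Complex.I)

def psi (p : ℤ × Site m) : ℂ := ∫ θ, f m E p.1 p.2 θ

lemma measurableSet_box : MeasurableSet (box m) :=
  MeasurableSet.univ_pi fun _ => measurableSet_Ioc

lemma isOpen_A : IsOpen {θ : Fin m → ℝ | |E - ∑ ν, 2 * Real.cos (θ ν)| < 2} := by
  have hc : Continuous fun θ : Fin m → ℝ => |E - ∑ ν, 2 * Real.cos (θ ν)| := by
    fun_prop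
  exact isOpen_lt hc continuous_const

lemma measurableSet_Sset : MeasurableSet (Sset m E) :=
  ((isOpen_A m E).measurableSet).inter (measurableSet_box m)

lemma volume_box : volume (box m) = (ENNReal.ofReal (2*π)) ^ m := by
  rw [box, volume_pi_pi]
  simp [Real.volume_Ioc]

lemma volume_box_lt_top : volume (box m) < ⊤ := by
  rw [volume_box]; exact ENNReal.pow_lt_top ENNReal.ofReal_lt_top

lemma volume_Sset_lt_top : volume (Sset m E) < ⊤ :=
  lt_of_le_of_lt (measure_mono Set.inter_subset_right) (volume_box_lt_top m)

lemma continuous_alp : Continuous (alp m E) := by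
  apply Real.continuous_arccos.comp
  fun_prop

lemma continuous_ph (k : ℤ) (n : Site m) : Continuous (ph m E k n) := by
  have h := continuous_alp m E
  unfold ph
  fun_prop

lemma integrable_f (k : ℤ) (n : Site m) : Integrable (f m E k n) volume := by
  rw [f, integrable_indicator_iff (measurableSet_Sset m E)]
  apply Measure.integrableOn_of_bounded (M := 1) (volume_Sset_lt_top m E).ne
  · have h := continuous_ph m E k n
    have : Continuous fun θ => Complex.exp ((ph m E k n θ : ℝ) * Complex.I) := by fun_prop
    exact this.aestronglyMeasurable
  · filter_upwards with θ
    rw [Complex.norm_exp_ofReal_mul_I]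


lemma sum_update (n : Site m) (ν : Fin m) (c : ℤ) (θ : Fin m → ℝ) :
    ∑ μ, ((Function.update n ν c) μ : ℝ) * θ μ
      = (∑ μ, (n μ : ℝ) * θ μ) + ((c : ℝ) - (n ν : ℝ)) * θ ν := by
  have h : (fun μ => ((Function.update n ν c) μ : ℝ) * θ μ)
      = Function.update (fun μ => (n μ : ℝ) * θ μ) ν ((c : ℝ) * θ ν) := by
    funext μ
    by_cases hμ : μ = ν
    · subst hμ; simp
    · simp [Function.update_of_ne hμ]
  rw [h, Finset.sum_update_of_mem (Finset.mem_univ ν),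
    Finset.sum_eq_sum_sdiff_singleton_add (Finset.mem_univ ν) (fun μ => (n μ : ℝ) * θ μ)]
  ring

lemma twocos (x : ℝ) :
    Complex.exp ((x : ℂ) * Complex.I) + Complex.exp (-(x : ℂ) * Complex.I)
      = 2 * ((Real.cos x : ℝ) : ℂ) := by
  rw [Complex.exp_mul_I, Complex.exp_mul_I, Complex.cos_neg, Complex.sin_neg,
    Complex.ofReal_cos]
  ring

lemma exp_shift (p x : ℝ) :
    Complex.exp (((p + x : ℝ) : ℂ) * Complex.I)
      = Complex.exp ((p : ℂ) * Complex.I) * Complex.exp ((x : ℂ) * Complex.I) := by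
  rw [← Complex.exp_add]; push_cast; ring_nf

lemma exp_shift' (p x : ℝ) :
    Complex.exp (((p - x : ℝ) : ℂ) * Complex.I)
      = Complex.exp ((p : ℂ) * Complex.I) * Complex.exp (-(x : ℂ) * Complex.I) := by
  rw [← Complex.exp_add]; push_cast; ring_nf

lemma keyexp (p a : ℝ) (c : Fin m → ℝ)
    (h : 2 * Real.cos a + ∑ ν, 2 * Real.cos (c ν) = E) :
    Complex.exp (((p + a : ℝ) : ℂ) * Complex.I) + Complex.exp (((p - a : ℝ) : ℂ) * Complex.I)
      + ∑ ν, (Complex.exp (((p - c ν : ℝ) : ℂ) * Complex.I)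
          + Complex.exp (((p + c ν : ℝ) : ℂ) * Complex.I))
      = (E : ℂ) * Complex.exp ((p : ℂ) * Complex.I) := by
  have hsum : ∑ ν, (Complex.exp (((p - c ν : ℝ) : ℂ) * Complex.I)
      + Complex.exp (((p + c ν : ℝ) : ℂ) * Complex.I))
      = Complex.exp ((p : ℂ) * Complex.I) * ∑ ν, 2 * ((Real.cos (c ν) : ℝ) : ℂ) := by
    rw [Finset.mul_sum]
    refine Finset.sum_congr rfl fun ν _ => ?_
    rw [exp_shift, exp_shift', ← mul_add, ← twocos]
    ring
  rw [exp_shift, exp_shift', hsum, ← mul_add, ← mul_add]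
  have h2 : ((2 : ℂ) * ((Real.cos a : ℝ) : ℂ) + ∑ ν, 2 * ((Real.cos (c ν) : ℝ) : ℂ)) = (E : ℂ) := by
    have := congrArg (fun t : ℝ => (t : ℂ)) h
    push_cast at this ⊢
    simpa using this
  rw [twocos, h2]
  ring

lemma cos_alp {θ : Fin m → ℝ} (hθ : θ ∈ Sset m E) :
    2 * Real.cos (alp m E θ) + ∑ ν, 2 * Real.cos (θ ν) = E := by
  have h1 : |E - ∑ ν, 2 * Real.cos (θ ν)| < 2 := hθ.1
  rw [abs_lt] at h1
  have : Real.cos (alp m E θ) = (E - ∑ ν, 2 * Real.cos (θ ν)) / 2 := by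
    apply Real.cos_arccos <;> [linarith [h1.1]; linarith [h1.2]]
  rw [this]; ring

lemma pointwise_eigen (k : ℤ) (n : Site m) (θ : Fin m → ℝ) :
    f m E (k+1) n θ + f m E (k-1) n θ
      + ∑ ν, (f m E k (Function.update n ν (n ν + 1)) θ
          + f m E k (Function.update n ν (n ν - 1)) θ)
      = (E : ℂ) * f m E k n θ := by
  by_cases hθ : θ ∈ Sset m E
  · simp only [f, Set.indicator_of_mem hθ]
    have h1 : ph m E (k+1) n θ = ph m E k n θ + alp m E θ := by
      unfold ph; push_cast; ring
    have h2 : ph m E (k-1) n θ = ph m E k n θ - alp m E θ := by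
      unfold ph; push_cast; ring
    have h3 : ∀ ν : Fin m, ph m E k (Function.update n ν (n ν + 1)) θ
        = ph m E k n θ - θ ν := by
      intro ν; unfold ph; rw [sum_update]; push_cast; ring
    have h4 : ∀ ν : Fin m, ph m E k (Function.update n ν (n ν - 1)) θ
        = ph m E k n θ + θ ν := by
      intro ν; unfold ph; rw [sum_update]; push_cast; ring
    rw [h1, h2]
    have hsc : (∑ ν, (Complex.exp ((ph m E k (Function.update n ν (n ν + 1)) θ : ℝ) * Complex.I)
        + Complex.exp ((ph m E k (Function.update n ν (n ν - 1)) θ : ℝ) * Complex.I)))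
        = ∑ ν, (Complex.exp (((ph m E k n θ - θ ν : ℝ) : ℂ) * Complex.I)
          + Complex.exp (((ph m E k n θ + θ ν : ℝ) : ℂ) * Complex.I)) := by
      refine Finset.sum_congr rfl fun ν _ => ?_
      rw [h3 ν, h4 ν]
    rw [hsc]
    exact keyexp m E (ph m E k n θ) (alp m E θ) θ (cos_alp m E hθ)
  · simp [f, Set.indicator_of_notMem hθ]

lemma eigen_eq (k : ℤ) (n : Site m) :
    psi m E (k + 1, n) + psi m E (k - 1, n)
      + ∑ ν, (psi m E (k, Function.update n ν (n ν + 1))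
          + psi m E (k, Function.update n ν (n ν - 1)))
      = (E : ℂ) * psi m E (k, n) := by
  unfold psi
  simp only
  rw [← integral_add (integrable_f m E (k+1) n) (integrable_f m E (k-1) n)]
  have hsum : (∑ ν, ((∫ θ, f m E k (Function.update n ν (n ν + 1)) θ)
      + ∫ θ, f m E k (Function.update n ν (n ν - 1)) θ))
      = ∫ θ, ∑ ν, (f m E k (Function.update n ν (n ν + 1)) θ
          + f m E k (Function.update n ν (n ν - 1)) θ) := by
    rw [integral_finset_sum]
    · refine Finset.sum_congr rfl fun ν _ => ?_
      rw [integral_add (integrable_f m E k _) (integrable_f m E k _)]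
    · exact fun ν _ => (integrable_f m E k _).add (integrable_f m E k _)
  have hA : Integrable (fun θ => f m E (k+1) n θ + f m E (k-1) n θ) volume :=
    (integrable_f m E (k+1) n).add (integrable_f m E (k-1) n)
  have hB : Integrable (fun θ => ∑ ν, (f m E k (Function.update n ν (n ν + 1)) θ
      + f m E k (Function.update n ν (n ν - 1)) θ)) volume :=
    integrable_finset_sum _ fun ν _ => (integrable_f m E k _).add (integrable_f m E k _)
  rw [hsum, ← integral_add hA hB]
  rw [← integral_const_mul]
  exact integral_congr_ae (ae_of_all _ fun θ => pointwise_eigen m E k n θ)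


lemma Sset_pos (hm : 1 ≤ m) (hE : |E| < 2 * (m + 1)) : 0 < volume (Sset m E) := by
  rw [abs_lt] at hE
  -- midpoint of the intersection of (E-2, E+2) and (-2m, 2m)
  set A : ℝ := max (E - 2) (-(2 * m)) with hA
  set Bv : ℝ := min (E + 2) (2 * m) with hB
  have hm' : (1 : ℝ) ≤ m := by exact_mod_cast hm
  have hAB : A < Bv := by
    apply max_lt <;> apply lt_min <;> [linarith; linarith; linarith; linarith]
  set c : ℝ := (A + Bv) / 2 with hc
  have hcA : A < c := by rw [hc]; linarith
  have hcB : c < Bv := by rw [hc]; linarith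
  have h1 : E - 2 < c := lt_of_le_of_lt (le_max_left _ _) hcA
  have h2 : c < E + 2 := lt_of_lt_of_le hcB (min_le_left _ _)
  have h3 : -(2 * m) < c := lt_of_le_of_lt (le_max_right _ _) hcA
  have h4 : c < 2 * m := lt_of_lt_of_le hcB (min_le_right _ _)
  set s : ℝ := c / (2 * m) with hs
  have hm0 : (0 : ℝ) < 2 * m := by linarith
  have hs1 : -1 < s := by rw [hs, lt_div_iff₀ hm0]; linarith
  have hs2 : s < 1 := by rw [hs, div_lt_iff₀ hm0]; linarith
  set θ₀ : Fin m → ℝ := fun _ => Real.arccos s with hθ₀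
  have hcos : Real.cos (Real.arccos s) = s := Real.cos_arccos (le_of_lt hs1) (le_of_lt hs2)
  have hsum : ∑ ν : Fin m, 2 * Real.cos (θ₀ ν) = c := by
    rw [hθ₀]
    simp only [hcos]
    rw [Finset.sum_const, Finset.card_univ, Fintype.card_fin, nsmul_eq_mul, hs]
    field_simp
  have hmemA : θ₀ ∈ {θ : Fin m → ℝ | |E - ∑ ν, 2 * Real.cos (θ ν)| < 2} := by
    rw [Set.mem_setOf_eq, hsum, abs_lt]
    constructor <;> linarith
  have harc1 : 0 < Real.arccos s := Real.arccos_pos.2 hs2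
  have harc2 : Real.arccos s < π := by
    refine lt_of_le_of_ne (Real.arccos_le_pi s) fun h => ?_
    have := Real.arccos_eq_pi.mp h
    linarith
  have hpi : π < 2 * π := by nlinarith [Real.pi_pos]
  set O : Set (Fin m → ℝ) :=
    {θ | |E - ∑ ν, 2 * Real.cos (θ ν)| < 2} ∩ Set.univ.pi fun _ => Set.Ioo (0:ℝ) (2*π)
  have hOopen : IsOpen O :=
    (isOpen_A m E).inter (isOpen_set_pi Set.finite_univ fun _ _ => isOpen_Ioo)
  have hmem : θ₀ ∈ O := by
    refine ⟨hmemA, ?_⟩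
    intro ν _
    exact ⟨harc1, by linarith⟩
  have hOS : O ⊆ Sset m E := by
    intro θ hθ
    exact ⟨hθ.1, fun ν hν => ⟨(hθ.2 ν hν).1, le_of_lt (hθ.2 ν hν).2⟩⟩
  exact lt_of_lt_of_le (hOopen.measure_pos volume ⟨θ₀, hmem⟩) (measure_mono hOS)

lemma psi_zero_zero : psi m E (0, 0) = ((volume (Sset m E)).toReal : ℂ) := by
  have hf0 : f m E 0 0 = (Sset m E).indicator fun _ => (1 : ℂ) := by
    funext θ
    unfold f
    congr 1
    funext θ'
    have : ph m E 0 0 θ' = 0 := by unfold ph; simp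
    rw [this]
    simp
  unfold psi
  simp only
  rw [hf0, integral_indicator_const _ (measurableSet_Sset m E)]
  simp
  rfl

lemma psi_ne_zero (hm : 1 ≤ m) (hE : |E| < 2 * (m + 1)) : psi m E ≠ 0 := by
  intro h
  have h0 : psi m E (0, 0) = 0 := by rw [h]; rfl
  rw [psi_zero_zero] at h0
  have hpos : 0 < (volume (Sset m E)).toReal :=
    ENNReal.toReal_pos (Sset_pos m E hm hE).ne' (volume_Sset_lt_top m E).ne
  have : (volume (Sset m E)).toReal = 0 := by exact_mod_cast h0
  linarith


def mu : Measure (Fin m → ℝ) := volume.restrict (box m)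

instance : IsFiniteMeasure (mu m) :=
  ⟨by rw [mu, Measure.restrict_apply_univ]; exact volume_box_lt_top m⟩

def efn (n : Site m) (θ : Fin m → ℝ) : ℂ :=
  Complex.exp (((∑ ν, (n ν : ℝ) * θ ν : ℝ) : ℂ) * Complex.I)

lemma memLp_efn (n : Site m) : MemLp (efn m n) 2 (mu m) := by
  apply MemLp.of_bound (C := 1)
  · have : Continuous (efn m n) := by unfold efn; fun_prop
    exact this.aestronglyMeasurable
  · filter_upwards with θ
    rw [efn, Complex.norm_exp_ofReal_mul_I]

lemma memLp_f (k : ℤ) (n : Site m) : MemLp (f m E k n) 2 (mu m) := by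
  apply MemLp.of_bound (C := 1)
  · apply AEStronglyMeasurable.indicator _ (measurableSet_Sset m E)
    have : Continuous fun θ => Complex.exp ((ph m E k n θ : ℝ) * Complex.I) := by
      have := continuous_ph m E k n
      fun_prop
    exact this.aestronglyMeasurable
  · filter_upwards with θ
    rw [f]
    by_cases hθ : θ ∈ Sset m E
    · rw [Set.indicator_of_mem hθ, Complex.norm_exp_ofReal_mul_I]
    · simp [Set.indicator_of_notMem hθ]

lemma inner_toLp {g g' : (Fin m → ℝ) → ℂ} (hg : MemLp g 2 (mu m)) (hg' : MemLp g' 2 (mu m)) :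
    ⟪hg.toLp g, hg'.toLp g'⟫ = ∫ θ, (starRingEnd ℂ) (g θ) * g' θ ∂(mu m) := by
  rw [MeasureTheory.L2.inner_def]
  apply integral_congr_ae
  filter_upwards [hg.coeFn_toLp, hg'.coeFn_toLp] with θ h1 h2
  rw [h1, h2, RCLike.inner_apply, mul_comm]

lemma conj_exp_ofReal_mul_I (r : ℝ) :
    (starRingEnd ℂ) (Complex.exp ((r : ℂ) * Complex.I)) = Complex.exp (-(r : ℂ) * Complex.I) := by
  rw [← Complex.exp_conj, map_mul, Complex.conj_ofReal, Complex.conj_I]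
  ring_nf

lemma oneD (c : ℤ) :
    ∫ t : ℝ, (Set.Ioc (0:ℝ) (2*π)).indicator
        (fun t => Complex.exp ((((c : ℝ) * t : ℝ) : ℂ) * Complex.I)) t
      = if c = 0 then ((2*π : ℝ) : ℂ) else 0 := by
  rw [integral_indicator measurableSet_Ioc,
    ← intervalIntegral.integral_of_le (by positivity : (0:ℝ) ≤ 2*π)]
  by_cases hc : c = 0
  · subst hc
    simp
  · rw [if_neg hc]
    have hcc : ((c : ℂ)) * Complex.I ≠ 0 := by
      simp [Complex.I_ne_zero, hc]
    have hre : ∀ t : ℝ, Complex.exp ((((c : ℝ) * t : ℝ) : ℂ) * Complex.I)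
        = Complex.exp (((c : ℂ) * Complex.I) * (t : ℂ)) := by
      intro t; push_cast; ring_nf
    rw [intervalIntegral.integral_congr (g := fun t : ℝ =>
      Complex.exp (((c : ℂ) * Complex.I) * (t : ℂ))) (fun t _ => hre t)]
    rw [integral_exp_mul_complex hcc]
    have h1 : ((c : ℂ) * Complex.I) * ((2*π : ℝ) : ℂ) = (c : ℂ) * (2 * (π : ℂ) * Complex.I) := by
      push_cast; ring
    rw [h1, Complex.exp_int_mul_two_pi_mul_I]
    simp

lemma box_indicator_prod (g : Fin m → ℝ → ℂ) :
    (box m).indicator (fun θ => ∏ ν, g ν (θ ν))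
      = fun θ => ∏ ν, (Set.Ioc (0:ℝ) (2*π)).indicator (g ν) (θ ν) := by
  funext θ
  by_cases hθ : θ ∈ box m
  · rw [Set.indicator_of_mem hθ]
    refine Finset.prod_congr rfl fun ν _ => ?_
    rw [Set.indicator_of_mem (hθ ν (Set.mem_univ ν))]
  · rw [Set.indicator_of_notMem hθ]
    rw [box, Set.mem_pi] at hθ
    push_neg at hθ
    obtain ⟨ν, -, hν⟩ := hθ
    exact (Finset.prod_eq_zero (Finset.mem_univ ν) (Set.indicator_of_notMem hν _)).symm

lemma orth_integral (n n' : Site m) :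
    ∫ θ, (starRingEnd ℂ) (efn m n θ) * efn m n' θ ∂(mu m)
      = if n = n' then (((2*π : ℝ) : ℂ)) ^ m else 0 := by
  have hpt : ∀ θ : Fin m → ℝ, (starRingEnd ℂ) (efn m n θ) * efn m n' θ
      = ∏ ν, Complex.exp ((((n' ν - n ν : ℤ) : ℝ) * θ ν : ℝ) * Complex.I) := by
    intro θ
    rw [efn, efn, conj_exp_ofReal_mul_I]
    rw [← Complex.exp_sum]
    have : (-((∑ ν, (n ν : ℝ) * θ ν : ℝ) : ℂ) * Complex.I
        + ((∑ ν, (n' ν : ℝ) * θ ν : ℝ) : ℂ) * Complex.I)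
        = ∑ ν, ((((n' ν - n ν : ℤ) : ℝ) * θ ν : ℝ) : ℂ) * Complex.I := by
      push_cast
      rw [← Finset.sum_mul, ← add_mul]
      congr 1
      rw [neg_add_eq_sub, ← Finset.sum_sub_distrib]
      exact Finset.sum_congr rfl fun ν _ => by ring
    rw [← Complex.exp_add, this]
  rw [integral_congr_ae (ae_of_all _ hpt)]
  rw [mu, ← integral_indicator (measurableSet_box m)]
  have hbp := box_indicator_prod m
    (fun ν u => Complex.exp ((((n' ν - n ν : ℤ) : ℝ) * u : ℝ) * Complex.I))
  rw [hbp]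
  have hprod := MeasureTheory.integral_fintype_prod_volume_eq_prod (ι := Fin m)
    (f := fun ν t => (Set.Ioc (0:ℝ) (2*π)).indicator
      (fun u => Complex.exp ((((n' ν - n ν : ℤ) : ℝ) * u : ℝ) * Complex.I)) t)
  rw [hprod]
  have h1 : ∀ ν : Fin m, (∫ t : ℝ, (Set.Ioc (0:ℝ) (2*π)).indicator
      (fun u => Complex.exp ((((n' ν - n ν : ℤ) : ℝ) * u : ℝ) * Complex.I)) t)
      = if n' ν - n ν = 0 then ((2*π : ℝ) : ℂ) else 0 := fun ν => oneD (n' ν - n ν)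
  rw [Finset.prod_congr rfl fun ν _ => h1 ν]
  by_cases h : n = n'
  · subst h
    simp
  · rw [if_neg h]
    obtain ⟨ν, hν⟩ := Function.ne_iff.mp h
    exact Finset.prod_eq_zero (Finset.mem_univ ν)
      (if_neg (sub_ne_zero.mpr (Ne.symm hν)))


def c0 : ℝ := (Real.sqrt ((2*π)^m))⁻¹

lemma c0_pos : 0 < c0 m := by
  rw [c0]
  apply inv_pos.2
  apply Real.sqrt_pos.2
  positivity

def wv (n : Site m) : Lp ℂ 2 (mu m) := ((c0 m : ℝ) : ℂ) • (memLp_efn m n).toLp (efn m n)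

def Fk (k : ℤ) : Lp ℂ 2 (mu m) := (memLp_f m E k 0).toLp (f m E k 0)

lemma orthonormal_wv : Orthonormal ℂ (wv m) := by
  rw [orthonormal_iff_ite]
  intro n n'
  rw [wv, wv, inner_smul_left, inner_smul_right, inner_toLp, orth_integral,
    Complex.conj_ofReal]
  by_cases h : n = n'
  · subst h
    rw [if_pos rfl, if_pos rfl]
    have hsq : (c0 m : ℝ) * (c0 m : ℝ) * ((2*π)^m : ℝ) = 1 := by
      rw [c0, ← Real.sqrt_mul_self (by positivity : (0:ℝ) ≤ (2*π)^m)]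
      have h0 : Real.sqrt ((2*π)^m) ≠ 0 := by
        apply ne_of_gt; apply Real.sqrt_pos.2; positivity
      field_simp
      rw [Real.sq_sqrt (Real.sqrt_nonneg _)]
    calc ((c0 m : ℝ) : ℂ) * (((c0 m : ℝ) : ℂ) * ((2*π : ℝ) : ℂ)^m)
        = (((c0 m * c0 m * (2*π)^m : ℝ)) : ℂ) := by push_cast; ring
      _ = 1 := by rw [hsq]; norm_num
  · rw [if_neg h, if_neg h]
    ring

lemma inner_wv_Fk (k : ℤ) (n : Site m) :
    ⟪wv m n, Fk m E k⟫ = ((c0 m : ℝ) : ℂ) * psi m E (k, n) := by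
  rw [wv, Fk, inner_smul_left, inner_toLp, Complex.conj_ofReal]
  congr 1
  have hpt : ∀ θ, (starRingEnd ℂ) (efn m n θ) * f m E k 0 θ = f m E k n θ := by
    intro θ
    by_cases hθ : θ ∈ Sset m E
    · rw [f, f, Set.indicator_of_mem hθ, Set.indicator_of_mem hθ, efn,
        conj_exp_ofReal_mul_I, ← Complex.exp_add]
      congr 1
      have hph : ph m E k 0 θ = (k : ℝ) * alp m E θ := by
        unfold ph; simp
      have hph' : ph m E k n θ = (k : ℝ) * alp m E θ - ∑ ν, (n ν : ℝ) * θ ν := rfl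
      rw [hph, hph']
      push_cast
      ring
    · rw [f, f, Set.indicator_of_notMem hθ, Set.indicator_of_notMem hθ, mul_zero]
  rw [integral_congr_ae (ae_of_all _ hpt)]
  rw [mu, ← integral_indicator (measurableSet_box m)]
  have hind : (box m).indicator (f m E k n) = f m E k n := by
    rw [f, Set.indicator_indicator]
    rw [Set.inter_eq_self_of_subset_right]
    exact Set.inter_subset_right
  rw [hind]
  rfl

def Kc : ℝ := ((mu m Set.univ) ^ ((2:ℝ≥0∞).toReal⁻¹) * ENNReal.ofReal 1).toReal

lemma norm_Fk_le (k : ℤ) : ‖Fk m E k‖ ≤ Kc m := by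
  rw [Fk, Lp.norm_toLp]
  apply ENNReal.toReal_mono
  · apply ENNReal.mul_ne_top _ ENNReal.ofReal_ne_top
    exact (ENNReal.rpow_lt_top_of_nonneg (by norm_num) (measure_ne_top _ _)).ne
  · have hb : ∀ᵐ θ ∂(mu m), ‖f m E k 0 θ‖ ≤ 1 := by
      filter_upwards with θ
      rw [f]
      by_cases hθ : θ ∈ Sset m E
      · rw [Set.indicator_of_mem hθ, Complex.norm_exp_ofReal_mul_I]
      · simp [Set.indicator_of_notMem hθ]
    exact eLpNorm_le_of_ae_bound (p := 2) (μ := mu m) hb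

lemma tsum_bound : ∃ B : ℝ, ∀ k : ℤ, ∑' n : Site m, ‖psi m E (k, n)‖ ^ 2 ≤ B := by
  refine ⟨((c0 m)⁻¹) ^ 2 * (Kc m) ^ 2, fun k => ?_⟩
  have hb := (orthonormal_wv m).tsum_inner_products_le (Fk m E k)
  have heq : ∀ n : Site m, ‖⟪wv m n, Fk m E k⟫‖ ^ 2 = (c0 m) ^ 2 * ‖psi m E (k, n)‖ ^ 2 := by
    intro n
    rw [inner_wv_Fk, norm_mul, Complex.norm_real, Real.norm_eq_abs, abs_of_pos (c0_pos m), mul_pow]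
  rw [tsum_congr heq, tsum_mul_left] at hb
  have hK : ‖Fk m E k‖ ^ 2 ≤ (Kc m) ^ 2 :=
    pow_le_pow_left₀ (norm_nonneg _) (norm_Fk_le m E k) 2
  have h2 : (c0 m) ^ 2 * (∑' n : Site m, ‖psi m E (k, n)‖ ^ 2) ≤ (Kc m) ^ 2 :=
    le_trans hb hK
  have hc0 : c0 m ≠ 0 := (c0_pos m).ne'
  calc ∑' n : Site m, ‖psi m E (k, n)‖ ^ 2
      = ((c0 m)⁻¹) ^ 2 * ((c0 m) ^ 2 * ∑' n : Site m, ‖psi m E (k, n)‖ ^ 2) := by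
        rw [← mul_assoc]
        field_simp
    _ ≤ ((c0 m)⁻¹) ^ 2 * (Kc m) ^ 2 := by
        apply mul_le_mul_of_nonneg_left h2 (by positivity)

end FreeLap

/-- For the free discrete Laplacian on `ℤ × ℤ^m`, `m ≥ 1`, and any
`E ∈ (-2(m+1), 2(m+1))`, there is a nonzero pointwise solution `ψ` of `H₀ ψ = E ψ`
whose `ℓ²`-norm in the last `m` variables is bounded uniformly in the first variable. -/
theorem free_laplacian_partially_l2_eigenfunction (m : ℕ) (hm : 1 ≤ m)
    (E : ℝ) (hE : |E| < 2 * (m + 1)) :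
    ∃ ψ : ℤ × Site m → ℂ, ψ ≠ 0 ∧
      (∀ (k : ℤ) (n : Site m),
        ψ (k + 1, n) + ψ (k - 1, n) +
          ∑ ν : Fin m,
            (ψ (k, Function.update n ν (n ν + 1)) + ψ (k, Function.update n ν (n ν - 1)))
          = (E : ℂ) * ψ (k, n)) ∧
      ∃ B : ℝ, ∀ k : ℤ, ∑' n : Site m, ‖ψ (k, n)‖ ^ 2 ≤ B :=
  ⟨FreeLap.psi m E, FreeLap.psi_ne_zero m E hm hE,
    fun k n => FreeLap.eigen_eq m E k n, FreeLap.tsum_bound m E⟩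
end
end
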